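/- One has ∑_{(x₁,x₂) ∈ ℕ²} Cat_{x₁} · Cat_{x₁+x₂} · (1/4)^{2x₁+x₂} = 8/π. -/

import Mathlib

open Real Filter Topology

namespace Stmt6Aux

/-- `b n = centralBinom n / 4^n`. -/
noncomputable def b (n : ℕ) : ℝ := (Nat.centralBinom n : ℝ) / 4 ^ n

/-- `c n = catalan n / 4^n`. -/
noncomputable def c (n : ℕ) : ℝ := (catalan n : ℝ) / 4 ^ n

lemma b_pos (n : ℕ) : 0 < b n := by
  have := Nat.centralBinom_pos n
  unfold b
  positivity

lemma c_nonneg (n : ℕ) : 0 ≤ c n := by unfold c; positivity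

lemma b_succ (n : ℕ) : b (n + 1) = b n * ((2 * n + 1) / (2 * n + 2)) := by
  have h := Nat.succ_mul_centralBinom_succ n
  have h' : ((n : ℝ) + 1) * (Nat.centralBinom (n + 1) : ℝ)
      = 2 * (2 * n + 1) * (Nat.centralBinom n : ℝ) := by exact_mod_cast h
  have hn : ((n : ℝ) + 1) ≠ 0 := by positivity
  unfold b
  rw [pow_succ]
  field_simp
  linear_combination 2 * h'

lemma c_eq (n : ℕ) : c n = 2 * (b n - b (n + 1)) := by
  have h := succ_mul_catalan_eq_centralBinom n
  have h' : ((n : ℝ) + 1) * (catalan n : ℝ) = (Nat.centralBinom n : ℝ) := by exact_mod_cast h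
  have hn : ((n : ℝ) + 1) ≠ 0 := by positivity
  rw [b_succ]
  unfold c b
  have h2 : (2 * (n : ℝ) + 2) ≠ 0 := by positivity
  field_simp
  linear_combination h'

lemma wallis_identity (n : ℕ) :
    Real.Wallis.W n * ((2 * n + 1) * (b n) ^ 2) = 1 := by
  induction n with
  | zero =>
    simp [Real.Wallis.W, b, Nat.centralBinom]
  | succ n ih =>
    rw [Real.Wallis.W_succ, b_succ]
    have h1 : (2 * (n : ℝ) + 1) ≠ 0 := by positivity
    have h2 : (2 * (n : ℝ) + 2) ≠ 0 := by positivity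
    have h3 : (2 * (n : ℝ) + 3) ≠ 0 := by positivity
    have : (2 * ((n : ℕ) + 1 : ℕ) + 1 : ℝ) = 2 * (n : ℝ) + 3 := by push_cast; ring
    rw [this]
    have goal : Real.Wallis.W n * ((2 * (n : ℝ) + 1) * (b n) ^ 2) *
        ((2 * (n : ℝ) + 2) / (2 * n + 1) * ((2 * n + 2) / (2 * n + 3)) *
          ((2 * (n : ℝ) + 3) * ((2 * n + 1) / (2 * n + 2)) ^ 2) / ((2 * (n : ℝ) + 1))) = 1 := by
      rw [ih]
      field_simp
    calc Real.Wallis.W n * ((2 * (n : ℝ) + 2) / (2 * n + 1) * ((2 * n + 2) / (2 * n + 3))) *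
        ((2 * (n : ℝ) + 3) * (b n * ((2 * n + 1) / (2 * n + 2))) ^ 2)
        = Real.Wallis.W n * ((2 * (n : ℝ) + 1) * (b n) ^ 2) *
          ((2 * (n : ℝ) + 2) / (2 * n + 1) * ((2 * n + 2) / (2 * n + 3)) *
            ((2 * (n : ℝ) + 3) * ((2 * n + 1) / (2 * n + 2)) ^ 2) / ((2 * (n : ℝ) + 1))) := by
          field_simp
      _ = 1 := goal

lemma tendsto_main : Tendsto (fun n : ℕ => (2 * (n : ℝ) + 1) * (b n) ^ 2) atTop (𝓝 (2 / π)) := by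
  have hW := Real.Wallis.tendsto_W_nhds_pi_div_two
  have hne : π / 2 ≠ 0 := by positivity
  have h := hW.inv₀ hne
  have heq : (fun n : ℕ => (Real.Wallis.W n)⁻¹)
      = fun n : ℕ => (2 * (n : ℝ) + 1) * (b n) ^ 2 := by
    funext n
    exact (eq_inv_of_mul_eq_one_left (by rw [mul_comm]; exact wallis_identity n)).symm
  rw [heq] at h
  rwa [inv_div] at h

lemma tendsto_bsq_zero : Tendsto (fun n : ℕ => (b n) ^ 2) atTop (𝓝 0) := by
  have h1 : Tendsto (fun n : ℕ => (2 * (n : ℝ) + 1)⁻¹) atTop (𝓝 0) := by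
    apply Tendsto.inv_tendsto_atTop
    apply Filter.tendsto_atTop_add_const_right
    exact (tendsto_natCast_atTop_atTop (R := ℝ)).const_mul_atTop two_pos
  have h := tendsto_main.mul h1
  rw [mul_zero] at h
  convert h using 2 with n
  have : (2 * (n : ℝ) + 1) ≠ 0 := by positivity
  field_simp

lemma tendsto_b_zero : Tendsto b atTop (𝓝 0) := by
  have h := (Real.continuous_sqrt.tendsto 0).comp tendsto_bsq_zero
  rw [Real.sqrt_zero] at h
  exact h.congr (fun n => Real.sqrt_sq (b_pos n).le)

lemma hasSum_tail (n : ℕ) : HasSum (fun m : ℕ => c (n + m)) (2 * b n) := by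
  rw [hasSum_iff_tendsto_nat_of_nonneg (fun m => c_nonneg (n + m))]
  have hsum : ∀ M : ℕ, ∑ i ∈ Finset.range M, c (n + i) = 2 * b n - 2 * b (n + M) := by
    intro M
    have key := Finset.sum_range_sub' (fun i => 2 * b (n + i)) M
    simp only [Nat.add_zero] at key
    rw [← key]
    apply Finset.sum_congr rfl
    intro i _
    rw [c_eq, show n + (i + 1) = (n + i) + 1 from rfl]
    ring
  simp only [hsum]
  have h : Tendsto (fun M : ℕ => b (n + M)) atTop (𝓝 0) := by
    have := tendsto_b_zero.comp (tendsto_add_atTop_nat n)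
    simpa [Nat.add_comm, Function.comp_def] using this
  have := (tendsto_const_nhds (x := 2 * b n) (f := atTop (α := ℕ))).sub (h.const_mul 2)
  simpa using this

lemma term_eq (n : ℕ) :
    c n * (2 * b n) = 8 * (n + 1) * (b (n + 1)) ^ 2 - 8 * n * (b n) ^ 2 := by
  rw [c_eq, b_succ]
  have h2 : (2 * (n : ℝ) + 2) ≠ 0 := by positivity
  field_simp
  ring

lemma hasSum_outer : HasSum (fun n : ℕ => c n * (2 * b n)) (8 / π) := by
  rw [hasSum_iff_tendsto_nat_of_nonneg
    (fun n => mul_nonneg (c_nonneg n) (by have := b_pos n; positivity))]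
  have hsum : ∀ N : ℕ, ∑ n ∈ Finset.range N, c n * (2 * b n) = 8 * N * (b N) ^ 2 := by
    intro N
    have key := Finset.sum_range_sub (fun n => 8 * (n : ℝ) * (b n) ^ 2) N
    calc ∑ n ∈ Finset.range N, c n * (2 * b n)
        = ∑ n ∈ Finset.range N, (8 * ((n : ℝ) + 1) * (b (n + 1)) ^ 2 - 8 * n * (b n) ^ 2) :=
          Finset.sum_congr rfl (fun n _ => term_eq n)
      _ = 8 * N * (b N) ^ 2 := by
          rw [show (fun n : ℕ => 8 * ((n : ℝ) + 1) * (b (n + 1)) ^ 2 - 8 * (n : ℝ) * (b n) ^ 2)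
            = (fun n : ℕ => 8 * ((n + 1 : ℕ) : ℝ) * (b (n + 1)) ^ 2 - 8 * (n : ℝ) * (b n) ^ 2) by
              funext n; push_cast; ring]
          rw [key]
          simp
  simp only [hsum]
  have h : Tendsto (fun N : ℕ => 4 * ((2 * (N : ℝ) + 1) * (b N) ^ 2) - 4 * (b N) ^ 2)
      atTop (𝓝 (4 * (2 / π) - 4 * 0)) :=
    (tendsto_main.const_mul 4).sub (tendsto_bsq_zero.const_mul 4)
  have heq : (fun N : ℕ => 4 * ((2 * (N : ℝ) + 1) * (b N) ^ 2) - 4 * (b N) ^ 2)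
      = fun N : ℕ => 8 * (N : ℝ) * (b N) ^ 2 := by
    funext N; ring
  rw [heq] at h
  convert h using 2
  rw [mul_zero, sub_zero]
  ring

end Stmt6Aux

open Stmt6Aux in
/-- `∑_{x₁,x₂} Cat_{x₁} Cat_{x₁+x₂} (1/4)^{2x₁+x₂} = 8/π`. -/
theorem stmt_6 :
    ∑' x : ℕ × ℕ,
      (catalan x.1 : ℝ) * (catalan (x.1 + x.2) : ℝ) * (1 / 4 : ℝ) ^ (2 * x.1 + x.2) = 8 / π := by
  have hf : ∀ x : ℕ × ℕ,
      (catalan x.1 : ℝ) * (catalan (x.1 + x.2) : ℝ) * (1 / 4 : ℝ) ^ (2 * x.1 + x.2)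
      = c x.1 * c (x.1 + x.2) := by
    intro ⟨a, m⟩
    simp only [c]
    rw [show 2 * a + m = a + (a + m) by ring, pow_add]
    rw [div_pow, div_pow, one_pow, one_pow]
    field_simp
  have hfiber : ∀ a : ℕ, HasSum (fun m : ℕ => c a * c (a + m)) (c a * (2 * b a)) :=
    fun a => (hasSum_tail a).mul_left (c a)
  have houter : HasSum (fun a : ℕ => c a * (2 * b a)) (8 / π) := hasSum_outer
  have hnonneg : 0 ≤ fun x : ℕ × ℕ =>
      (catalan x.1 : ℝ) * (catalan (x.1 + x.2) : ℝ) * (1 / 4 : ℝ) ^ (2 * x.1 + x.2) := by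
    intro x
    positivity
  have hsummable : Summable (fun x : ℕ × ℕ =>
      (catalan x.1 : ℝ) * (catalan (x.1 + x.2) : ℝ) * (1 / 4 : ℝ) ^ (2 * x.1 + x.2)) := by
    rw [summable_prod_of_nonneg hnonneg]
    constructor
    · intro a
      apply Summable.congr (hfiber a).summable
      intro m
      rw [hf (a, m)]
    · apply Summable.congr houter.summable
      intro a
      rw [eq_comm]
      have : ∑' m : ℕ, (catalan a : ℝ) * (catalan (a + m) : ℝ) * (1 / 4 : ℝ) ^ (2 * a + m)
          = ∑' m : ℕ, c a * c (a + m) := by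
        apply tsum_congr
        intro m
        exact hf (a, m)
      rw [this, (hfiber a).tsum_eq]
  rw [Summable.tsum_prod' hsummable (fun a => by
    apply Summable.congr (hfiber a).summable
    intro m
    rw [hf (a, m)])]
  have : ∀ a : ℕ, ∑' m : ℕ, (catalan a : ℝ) * (catalan (a + m) : ℝ) * (1 / 4 : ℝ) ^ (2 * a + m)
      = c a * (2 * b a) := by
    intro a
    rw [show (fun m : ℕ => (catalan a : ℝ) * (catalan (a + m) : ℝ) * (1 / 4 : ℝ) ^ (2 * a + m))
      = fun m : ℕ => c a * c (a + m) from funext fun m => hf (a, m)]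
    exact (hfiber a).tsum_eq
  rw [tsum_congr this]
  exact houter.tsum_eq
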